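/- For integers j ∈ ℤ and k ≥ 0, the double integral (1/4π²)∫₀^{2π}∫₀^{2π} e^{ijθ}e^{ikφ}/(-5 + 2cosθ + 2cosφ) dθ dφ equals the single integral -(1/2π)∫₀^{2π} e^{ijθ}·[(1/2)(5 - 2cosθ - √((5-2cosθ)²-4))]^k / √((5-2cosθ)²-4) dθ. -/

import Mathlib

open Complex Metric intervalIntegral Real

lemma inner_int (a : ℝ) (ha : 3 ≤ a) (k : ℕ) :
    (∫ φ in (0:ℝ)..(2*Real.pi), Complex.exp (Complex.I*k*φ) / ((-a + 2*Real.cos φ : ℝ):ℂ))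
    = -(2*(Real.pi:ℂ)) * (((1/2*(a - Real.sqrt (a^2-4)) : ℝ):ℂ)^k
        / ((Real.sqrt (a^2-4) : ℝ):ℂ)) := by
  set s : ℝ := Real.sqrt (a^2-4) with hs_def
  have hs2 : s^2 = a^2-4 := Real.sq_sqrt (by nlinarith)
  have hs_pos : 0 < s := Real.sqrt_pos.2 (by nlinarith)
  have hs_lt : s < a := by nlinarith
  set α : ℝ := 1/2*(a-s) with hα_def
  set β : ℝ := 1/2*(a+s) with hβ_def
  have hαβ : α*β = 1 := by rw [hα_def, hβ_def]; nlinarith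
  have hβ1 : 1 < β := by rw [hβ_def]; nlinarith
  have hα_pos : 0 < α := by rw [hα_def]; nlinarith
  have hα1 : α < 1 := by nlinarith
  set f : ℂ → ℂ := fun z => z^k / (Complex.I * (z - (β:ℂ))) with hf_def
  have hf : DiffContOnCl ℂ f (ball (0:ℂ) 1) := by
    apply DifferentiableOn.diffContOnCl
    rw [closure_ball (0:ℂ) one_ne_zero]
    intro z hz
    apply DifferentiableAt.differentiableWithinAt
    have hz1 : ‖z‖ ≤ 1 := by simpa [Complex.dist_eq] using hz
    have hne : Complex.I * (z - (β:ℂ)) ≠ 0 := by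
      apply mul_ne_zero Complex.I_ne_zero
      rw [sub_ne_zero]
      intro h
      rw [h] at hz1
      simp only [Complex.norm_real, Real.norm_eq_abs] at hz1
      rw [abs_of_pos (by linarith)] at hz1
      linarith
    exact (differentiableAt_pow k).div (by fun_prop) hne
  have hw : (α:ℂ) ∈ ball (0:ℂ) 1 := by
    simp only [mem_ball, Complex.dist_eq, sub_zero, Complex.norm_real, Real.norm_eq_abs]
    rw [abs_of_pos hα_pos]; exact hα1
  have key := hf.circleIntegral_sub_inv_smul hw
  have hLHS : (∮ z in C((0:ℂ), 1), (z - (α:ℂ))⁻¹ • f z)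
      = ∫ φ in (0:ℝ)..(2*Real.pi), Complex.exp (Complex.I*k*φ) / ((-a + 2*Real.cos φ : ℝ):ℂ) := by
    rw [circleIntegral]
    apply intervalIntegral.integral_congr
    intro φ _
    set w : ℂ := Complex.exp (φ * Complex.I) with hw_def
    have hw0 : w ≠ 0 := Complex.exp_ne_zero _
    have habs : ‖w‖ = 1 := Complex.norm_exp_ofReal_mul_I φ
    have hwα : w - (α:ℂ) ≠ 0 := by
      rw [sub_ne_zero]; intro h
      rw [h, Complex.norm_real, Real.norm_eq_abs, abs_of_pos hα_pos] at habs; linarith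
    have hwβ : w - (β:ℂ) ≠ 0 := by
      rw [sub_ne_zero]; intro h
      rw [h, Complex.norm_real, Real.norm_eq_abs, abs_of_pos (by linarith)] at habs; linarith
    have hcos : 2 * Complex.cos φ * w = w^2 + 1 := by
      have h1 : w = Complex.cos φ + Complex.sin φ * Complex.I := by
        rw [hw_def, Complex.exp_mul_I]
      rw [h1]
      linear_combination (Complex.sin_sq_add_cos_sq (φ:ℂ))
        - (Complex.sin (φ:ℂ))^2 * Complex.I_sq
    have hab : ((α:ℂ)) + ((β:ℂ)) = (a:ℂ) := by
      rw [hα_def, hβ_def]; push_cast; ring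
    have hab2 : ((α:ℂ)) * ((β:ℂ)) = 1 := by
      rw [← Complex.ofReal_mul, hαβ, Complex.ofReal_one]
    have hden : ((-a + 2*Real.cos φ : ℝ):ℂ) * w = (w - (α:ℂ)) * (w - (β:ℂ)) := by
      push_cast
      linear_combination hcos + w*hab - hab2
    have hwk : Complex.exp (Complex.I*k*φ) = w^k := by
      rw [hw_def, ← Complex.exp_nat_mul]; congr 1; ring
    have hden0 : ((-a + 2*Real.cos φ : ℝ):ℂ) ≠ 0 := by
      intro h
      rw [h, zero_mul] at hden
      exact mul_ne_zero hwα hwβ hden.symm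
    simp only [deriv_circleMap, circleMap, Complex.ofReal_one, one_mul, zero_add, ← hw_def,
      smul_eq_mul, hf_def, hwk]
    push_cast at hden hden0 ⊢
    field_simp
    linear_combination hden
  rw [hLHS] at key
  have hαβc : (α:ℂ) - (β:ℂ) = -(s:ℂ) := by
    rw [hα_def, hβ_def]; push_cast; ring
  have hs0 : ((s:ℝ):ℂ) ≠ 0 := by simpa using hs_pos.ne'
  have hfα : f (α:ℂ) = (α:ℂ)^k / (Complex.I * ((α:ℂ) - (β:ℂ))) := rfl
  rw [key, smul_eq_mul, hfα, hαβc]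
  field_simp

/-- Reduction of the double contour integral for the inverse Kasteleyn matrix entries to a
single integral via the residue theorem: for `j ∈ ℤ` and `k ≥ 0`,
`(1/4π²)∫∫ e^{ijθ}e^{ikφ}/(-5+2cosθ+2cosφ) dθdφ
  = -(1/2π)∫ e^{ijθ} α(θ)^k / √((5-2cosθ)²-4) dθ`
with `α(θ) = (5 - 2cosθ - √((5-2cosθ)²-4))/2`. -/
theorem stmt10 (j : ℤ) (k : ℕ) :
    (1 / (4 * (Real.pi : ℂ) ^ 2)) *
      ∫ θ in (0 : ℝ)..(2 * Real.pi), ∫ φ in (0 : ℝ)..(2 * Real.pi),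
        Complex.exp (Complex.I * j * θ) * Complex.exp (Complex.I * k * φ) /
          ((-5 + 2 * Real.cos θ + 2 * Real.cos φ : ℝ) : ℂ) =
    -(1 / (2 * (Real.pi : ℂ))) *
      ∫ θ in (0 : ℝ)..(2 * Real.pi),
        Complex.exp (Complex.I * j * θ) *
          (((1 / 2 * (5 - 2 * Real.cos θ - Real.sqrt ((5 - 2 * Real.cos θ) ^ 2 - 4)) : ℝ) : ℂ)) ^ k /
          ((Real.sqrt ((5 - 2 * Real.cos θ) ^ 2 - 4) : ℝ) : ℂ) := by
  have hπ : (Real.pi : ℂ) ≠ 0 := Complex.ofReal_ne_zero.2 Real.pi_ne_zero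
  have h1 : ∀ θ : ℝ,
      (∫ φ in (0 : ℝ)..(2 * Real.pi),
        Complex.exp (Complex.I * j * θ) * Complex.exp (Complex.I * k * φ) /
          ((-5 + 2 * Real.cos θ + 2 * Real.cos φ : ℝ) : ℂ))
      = -(2*(Real.pi:ℂ)) * (Complex.exp (Complex.I * j * θ) *
          (((1 / 2 * (5 - 2 * Real.cos θ - Real.sqrt ((5 - 2 * Real.cos θ) ^ 2 - 4)) : ℝ) : ℂ)) ^ k /
          ((Real.sqrt ((5 - 2 * Real.cos θ) ^ 2 - 4) : ℝ) : ℂ)) := by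
    intro θ
    have ha : (3:ℝ) ≤ 5 - 2*Real.cos θ := by nlinarith [Real.cos_le_one θ]
    have hinner := inner_int (5 - 2*Real.cos θ) ha k
    have hcongr : (∫ φ in (0 : ℝ)..(2 * Real.pi),
        Complex.exp (Complex.I * j * θ) * Complex.exp (Complex.I * k * φ) /
          ((-5 + 2 * Real.cos θ + 2 * Real.cos φ : ℝ) : ℂ))
        = ∫ φ in (0 : ℝ)..(2 * Real.pi),
          Complex.exp (Complex.I * j * θ) *
            (Complex.exp (Complex.I * k * φ) / ((-(5 - 2*Real.cos θ) + 2 * Real.cos φ : ℝ) : ℂ)) := by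
      apply intervalIntegral.integral_congr
      intro φ _
      beta_reduce
      rw [mul_div_assoc]
      congr 2
      push_cast
      ring
    rw [hcongr, intervalIntegral.integral_const_mul, hinner]
    ring
  rw [intervalIntegral.integral_congr (fun θ _ => h1 θ)]
  rw [intervalIntegral.integral_const_mul]
  field_simp
  ring
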